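/- arXiv:1801.09197 — 6 statements merged into one kernel-verified Lean document; each statement's English description precedes it below -/
import Mathlib

section
/- (Cogenerator faithfulness.) Let R be a commutative ring and F an R-module which is a cogenerator: for every R-module N and every nonzero n ∈ N there exists an R-linear map φ : N →ₗ[R] F with φ n ≠ 0. Let M be a p×q matrix over R such that for every f : Fin q → F and every i ∈ Fin p, ∑_j M i j • f j = 0. Then M = 0. -/
universe u v

/-- Cogenerator faithfulness: if `F` is a cogenerator among `R`-modules and the matrix `M`
annihilates every vector `f : Fin q → F`, then `M = 0`. -/
theorem matrix_eq_zero_of_cogenerator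
    {R : Type u} [CommRing R] {F : Type v} [AddCommGroup F] [Module R F]
    (hcog : ∀ (N : Type u) [AddCommGroup N] [Module R N] (n : N), n ≠ 0 →
      ∃ φ : N →ₗ[R] F, φ n ≠ 0)
    {p q : ℕ} (M : Matrix (Fin p) (Fin q) R)
    (hM : ∀ (f : Fin q → F) (i : Fin p), ∑ j, M i j • f j = 0) :
    M = 0 := by
  ext i j
  by_contra h
  obtain ⟨φ, hφ⟩ := hcog R (M i j) h
  have := hM (fun k => if k = j then φ 1 else 0) i
  rw [Finset.sum_eq_single j] at this
  · simp only [if_pos rfl] at this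
    apply hφ
    have : φ (M i j • (1 : R)) = 0 := by rw [map_smul]; simpa using this
    simpa using this
  · intro k _ hk; simp [hk]
  · simp
end

section
/- (Cogenerator duality for rows.) Let R be a commutative ring and F an R-module that is both injective (Module.Injective R F) and a cogenerator (for every R-module N and every nonzero n ∈ N there exists an R-linear map φ : N →ₗ[R] F with φ n ≠ 0). Let A be an ℓ'×ℓ matrix over R and r ∈ R^ℓ a row vector. If every f ∈ sol_F(A) satisfies ∑_j r j • f j = 0, then r lies in the R-submodule of R^ℓ generated by the rows of A. -/
universe u v

/-- Cogenerator duality for rows: over an injective cogenerator module `F`, every row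
equation `r` satisfied by all solutions of `A` is an `R`-linear consequence of the rows
of `A`. -/
theorem row_mem_span_of_annihilates_solutions
    {R : Type u} [CommRing R] {F : Type v} [AddCommGroup F] [Module R F]
    (hinj : Module.Injective R F)
    (hcog : ∀ (N : Type u) [AddCommGroup N] [Module R N] (n : N), n ≠ 0 →
      ∃ φ : N →ₗ[R] F, φ n ≠ 0)
    {ℓ' ℓ : ℕ} (A : Matrix (Fin ℓ') (Fin ℓ) R) (r : Fin ℓ → R)
    (hr : ∀ f : Fin ℓ → F, (∀ i, ∑ j, A i j • f j = 0) → ∑ j, r j • f j = 0) :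
    r ∈ Submodule.span R (Set.range fun i => fun j => A i j) := by
  by_contra hmem
  set M : Submodule R (Fin ℓ → R) :=
    Submodule.span R (Set.range fun i => fun j => A i j) with hM
  have hne : (Submodule.Quotient.mk r : (Fin ℓ → R) ⧸ M) ≠ 0 := by
    simpa [Submodule.Quotient.mk_eq_zero] using hmem
  obtain ⟨φ, hφ⟩ := hcog ((Fin ℓ → R) ⧸ M) (Submodule.Quotient.mk r) hne
  set ψ : (Fin ℓ → R) →ₗ[R] F := φ.comp (M.mkQ) with hψ
  have key : ∀ v : Fin ℓ → R, ψ v = ∑ j, v j • ψ (Pi.single j 1) := by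
    intro v
    have hv : v = ∑ j, v j • (Pi.single j 1 : Fin ℓ → R) := by
      ext k
      simp [Finset.sum_apply, Pi.single_apply, mul_ite, Finset.sum_ite_eq]
    conv_lhs => rw [hv]
    simp [map_sum]
  set f : Fin ℓ → F := fun j => ψ (Pi.single j 1) with hf
  have hsol : ∀ i, ∑ j, A i j • f j = 0 := by
    intro i
    have : ψ (fun j => A i j) = 0 := by
      simp only [hψ, LinearMap.comp_apply, Submodule.mkQ_apply]
      have : (Submodule.Quotient.mk (fun j => A i j) : (Fin ℓ → R) ⧸ M) = 0 := by
        rw [Submodule.Quotient.mk_eq_zero]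
        exact Submodule.subset_span ⟨i, rfl⟩
      rw [this, map_zero]
    rw [key] at this
    simpa [hf] using this
  have h1 : ψ r = ∑ j, r j • f j := key r
  have h2 : ψ r = φ (Submodule.Quotient.mk r) := rfl
  have := hr f hsol
  rw [← h1, h2] at this
  exact hφ this
end

section
/- (Theorem 3.1, maximality part.) Let R be a commutative ring and F an R-module that is a cogenerator (for every R-module N and every nonzero n ∈ N there exists φ : N →ₗ[R] F with φ n ≠ 0). Let A be an ℓ'×ℓ matrix and B an ℓ×ℓ'' matrix over R such that the columns of B generate the right kernel of A: the kernel of the R-linear map R^ℓ → R^{ℓ'}, v ↦ Matrix.mulVec A v, equals the R-submodule of R^ℓ generated by the columns of B. Then for every m and every ℓ×m matrix C over R such that (fun i => ∑_j C i j • h j) ∈ sol_F(A) for all h : Fin m → F, the image { (fun i => ∑_j C i j • h j) | h : Fin m → F } is contained in the image { (fun i => ∑_j B i j • g j) | g : Fin ℓ'' → F }. -/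
universe u v

/-- Theorem 3.1, maximality part: over a cogenerator module `F`, if the columns of `B`
generate the right kernel of `A`, then the image of any operator matrix `C` whose image
lies in `sol_F(A)` is contained in the image of `B`. -/
theorem image_subset_of_right_kernel_cogenerator
    {R : Type u} [CommRing R] {F : Type v} [AddCommGroup F] [Module R F]
    (hcog : ∀ (N : Type u) [AddCommGroup N] [Module R N] (n : N), n ≠ 0 →
      ∃ φ : N →ₗ[R] F, φ n ≠ 0)
    {ℓ' ℓ ℓ'' : ℕ} (A : Matrix (Fin ℓ') (Fin ℓ) R) (B : Matrix (Fin ℓ) (Fin ℓ'') R)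
    (hker : LinearMap.ker A.mulVecLin =
      Submodule.span R (Set.range fun j => fun i => B i j)) :
    ∀ (m : ℕ) (C : Matrix (Fin ℓ) (Fin m) R),
      (∀ h : Fin m → F, (fun i => ∑ j, C i j • h j) ∈
        {f : Fin ℓ → F | ∀ i, ∑ j, A i j • f j = 0}) →
      {f : Fin ℓ → F | ∃ h : Fin m → F, f = fun i => ∑ j, C i j • h j} ⊆
        {f : Fin ℓ → F | ∃ g : Fin ℓ'' → F, f = fun i => ∑ j, B i j • g j} := by
  intro m C hC f hf
  obtain ⟨h, rfl⟩ := hf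
  -- Each column of C lies in the kernel of A.mulVecLin
  have hcol : ∀ k : Fin m, (fun j => C j k) ∈ LinearMap.ker A.mulVecLin := by
    intro k
    rw [LinearMap.mem_ker]
    funext i
    by_contra hne
    obtain ⟨φ, hφ⟩ := hcog R (A.mulVec (fun j => C j k) i) hne
    have := hC (fun k' => if k' = k then φ 1 else 0) i
    apply hφ
    have hφr : φ (A.mulVec (fun j => C j k) i) =
        ∑ j, A i j • (∑ k', C j k' • (if k' = k then φ 1 else 0)) := by
      simp only [Matrix.mulVec, dotProduct, map_sum]
      refine Finset.sum_congr rfl fun j _ => ?_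
      rw [Finset.sum_eq_single k]
      · simp [smul_smul, ← map_smul, mul_comm]
      · intro b _ hb; simp [hb]
      · simp
    rw [hφr, this]
  -- So each column of C is a combination of columns of B
  have hcomb : ∀ k : Fin m, ∃ d : Fin ℓ'' → R,
      ∀ i, C i k = ∑ j, d j * B i j := by
    intro k
    have := hcol k
    rw [hker, Submodule.mem_span_range_iff_exists_fun] at this
    obtain ⟨d, hd⟩ := this
    refine ⟨d, fun i => ?_⟩
    have := congrFun hd i
    simpa [Finset.sum_apply, eq_comm] using this
  choose d hd using hcomb
  refine ⟨fun j => ∑ k, d k j • h k, ?_⟩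
  funext i
  simp only [hd]
  simp only [Finset.sum_smul, Finset.smul_sum, smul_smul]
  rw [Finset.sum_comm]
  exact Finset.sum_congr rfl fun k _ => Finset.sum_congr rfl fun j _ => by rw [mul_comm]
end

section
/- (Corollary 3.2, characterization.) Let R be a commutative ring and F an R-module that is injective (Module.Injective R F) and a cogenerator (for every R-module N and every nonzero n ∈ N there exists φ : N →ₗ[R] F with φ n ≠ 0). Let A be an ℓ'×ℓ matrix, B an ℓ×ℓ'' matrix, and A' an ℓ'''×ℓ matrix over R such that the columns of B generate the right kernel of A (the kernel of v ↦ Matrix.mulVec A v equals the column module of B) and the rows of A' generate the left kernel of B (the kernel of w ↦ Matrix.vecMul w B equals the row module of A'). Then sol_F(A) = { (fun i => ∑_j B i j • h j) | h : Fin ℓ'' → F } if and only if the R-submodule of R^ℓ generated by the rows of A equals the R-submodule generated by the rows of A'. -/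
universe u v

section aux
variable {R : Type u} [CommRing R] {F : Type v} [AddCommGroup F] [Module R F]

/-- The linear-combination map `v ↦ ∑ j, v j • f j`. -/
def lcAux {n : ℕ} (f : Fin n → F) : (Fin n → R) →ₗ[R] F where
  toFun v := ∑ j, v j • f j
  map_add' x y := by simp [add_smul, Finset.sum_add_distrib]
  map_smul' c x := by simp [Finset.smul_sum, mul_smul]

lemma lcAux_apply {n : ℕ} (f : Fin n → F) (v : Fin n → R) :
    lcAux f v = ∑ j, v j • f j := rfl

lemma lcAux_single {n : ℕ} (f : Fin n → F) (i : Fin n) :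
    lcAux f (Pi.single i (1 : R)) = f i := by
  classical
  simp [lcAux_apply, Pi.single_apply, ite_smul]

lemma single_decomp {n : ℕ} (w : Fin n → R) :
    w = ∑ j, w j • (Pi.single j (1 : R) : Fin n → R) := by
  classical
  conv_lhs => rw [← Finset.univ_sum_single w]
  refine Finset.sum_congr rfl fun j _ => ?_
  rw [← Pi.single_smul, smul_eq_mul, mul_one]

/-- Cogenerator Galois lemma. -/
lemma span_le_of_sol_subset {n : ℕ}
    (hcog : ∀ (N : Type u) [AddCommGroup N] [Module R N] (x : N), x ≠ 0 →
      ∃ φ : N →ₗ[R] F, φ x ≠ 0)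
    (U V : Submodule R (Fin n → R))
    (h : ∀ f : Fin n → F, (∀ u ∈ U, lcAux f u = 0) → ∀ v ∈ V, lcAux f v = 0) :
    V ≤ U := by
  classical
  intro v hv
  by_contra hvU
  obtain ⟨φ, hφ⟩ := hcog ((Fin n → R) ⧸ U) (Submodule.Quotient.mk v)
    (by simpa [Submodule.Quotient.mk_eq_zero] using hvU)
  set f : Fin n → F := fun j => φ (Submodule.Quotient.mk (Pi.single j 1)) with hf
  have key : ∀ w : Fin n → R, lcAux f w = φ (Submodule.Quotient.mk w) := by
    intro w
    conv_rhs => rw [single_decomp w]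
    rw [lcAux_apply]
    simp only [hf]
    rw [show (Submodule.Quotient.mk (∑ j, w j • (Pi.single j (1:R) : Fin n → R)) : (Fin n → R) ⧸ U)
        = ∑ j, w j • (Submodule.Quotient.mk (Pi.single j (1:R)) : (Fin n → R) ⧸ U) by
      rw [show ∀ x : Fin n → R, (Submodule.Quotient.mk x : (Fin n → R) ⧸ U) = U.mkQ x
          from fun _ => rfl]
      rw [map_sum]
      simp]
    rw [map_sum]
    simp
  have h1 : ∀ u ∈ U, lcAux f u = 0 := by
    intro u hu
    rw [key]
    rw [(Submodule.Quotient.mk_eq_zero U).2 hu]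
    simp
  exact hφ (by rw [← key]; exact h f h1 v hv)

end aux

/-- Corollary 3.2, characterization: over an injective cogenerator module `F`, with
`B = rker(A)` and `A' = lker(B)`, the matrix `B` parametrizes `sol_F(A)` if and only if
the row modules of `A` and `A'` coincide. -/
theorem parametrizable_iff_row_modules_eq
    {R : Type u} [CommRing R] {F : Type v} [AddCommGroup F] [Module R F]
    (hinj : Module.Injective R F)
    (hcog : ∀ (N : Type u) [AddCommGroup N] [Module R N] (n : N), n ≠ 0 →
      ∃ φ : N →ₗ[R] F, φ n ≠ 0)
    {ℓ' ℓ ℓ'' ℓ''' : ℕ}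
    (A : Matrix (Fin ℓ') (Fin ℓ) R) (B : Matrix (Fin ℓ) (Fin ℓ'') R)
    (A' : Matrix (Fin ℓ''') (Fin ℓ) R)
    (hrker : LinearMap.ker A.mulVecLin =
      Submodule.span R (Set.range fun j => fun i => B i j))
    (hlker : LinearMap.ker B.vecMulLinear =
      Submodule.span R (Set.range fun i => fun j => A' i j)) :
    ({f : Fin ℓ → F | ∀ i, ∑ j, A i j • f j = 0} =
        {f : Fin ℓ → F | ∃ h : Fin ℓ'' → F, f = fun i => ∑ j, B i j • h j}) ↔
      Submodule.span R (Set.range fun i => fun j => A i j) =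
        Submodule.span R (Set.range fun i => fun j => A' i j) := by
  classical
  -- A·B = 0
  have hAB : ∀ i k, ∑ j, A i j * B j k = 0 := by
    intro i k
    have hmem : (fun j => B j k) ∈ LinearMap.ker A.mulVecLin := by
      rw [hrker]; exact Submodule.subset_span ⟨k, rfl⟩
    have h0 := congrFun (LinearMap.mem_ker.mp hmem) i
    simpa [Matrix.mulVecLin_apply, Matrix.mulVec, dotProduct] using h0
  -- A'·B = 0
  have hA'B : ∀ i k, ∑ j, A' i j * B j k = 0 := by
    intro i k
    have hmem : (fun j => A' i j) ∈ LinearMap.ker B.vecMulLinear := by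
      rw [hlker]; exact Submodule.subset_span ⟨i, rfl⟩
    have h0 := congrFun (LinearMap.mem_ker.mp hmem) k
    simpa [Matrix.vecMulLinear_apply, Matrix.vecMul, dotProduct] using h0
  -- translation between solution sets and span conditions
  have solspan : ∀ {m : ℕ} (M : Matrix (Fin m) (Fin ℓ) R) (f : Fin ℓ → F),
      (∀ v ∈ Submodule.span R (Set.range fun i => fun j => M i j), lcAux (R := R) f v = 0)
        ↔ ∀ i, ∑ j, M i j • f j = 0 := by
    intro m M f
    constructor
    · intro H i
      have := H (fun j => M i j) (Submodule.subset_span ⟨i, rfl⟩)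
      simpa [lcAux_apply] using this
    · intro H v hv
      have hle : Submodule.span R (Set.range fun i => fun j => M i j)
          ≤ LinearMap.ker (lcAux (R := R) f) := by
        rw [Submodule.span_le]
        rintro _ ⟨i, rfl⟩
        simpa [LinearMap.mem_ker, lcAux_apply] using H i
      exact LinearMap.mem_ker.mp (hle hv)
  -- key computation: if M·B = 0 then M kills anything of the form B·h
  have comp : ∀ {m : ℕ} (M : Matrix (Fin m) (Fin ℓ) R), (∀ i k, ∑ j, M i j * B j k = 0) →
      ∀ (h : Fin ℓ'' → F) (i : Fin m), ∑ j, M i j • (∑ k, B j k • h k) = 0 := by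
    intro m M hM h i
    calc ∑ j, M i j • ∑ k, B j k • h k
        = ∑ j, ∑ k, (M i j * B j k) • h k := by
          simp [Finset.smul_sum, mul_smul]
      _ = ∑ k, ∑ j, (M i j * B j k) • h k := Finset.sum_comm
      _ = ∑ k, (∑ j, M i j * B j k) • h k := by
          exact Finset.sum_congr rfl fun k _ => (Finset.sum_smul).symm
      _ = 0 := by simp [hM]
  -- rowspan A ≤ rowspan A'
  have hAA' : Submodule.span R (Set.range fun i => fun j => A i j)
      ≤ Submodule.span R (Set.range fun i => fun j => A' i j) := by
    rw [← hlker, Submodule.span_le]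
    rintro _ ⟨i, rfl⟩
    have hz : B.vecMulLinear (fun j => A i j) = 0 := by
      funext k
      simpa [Matrix.vecMulLinear_apply, Matrix.vecMul, dotProduct] using hAB i k
    exact LinearMap.mem_ker.mpr hz
  constructor
  · -- parametrizability ⇒ equality of row modules
    intro hsol
    refine le_antisymm hAA' ?_
    refine span_le_of_sol_subset hcog _ _ ?_
    intro f hfA
    have hfA' : ∀ i, ∑ j, A i j • f j = 0 := (solspan A f).1 hfA
    have hfB : f ∈ {f : Fin ℓ → F | ∃ h : Fin ℓ'' → F, f = fun i => ∑ j, B i j • h j} := by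
      rw [← hsol]; exact hfA'
    obtain ⟨h, rfl⟩ := hfB
    refine (solspan A' _).2 ?_
    intro i
    simpa using comp A' hA'B h i
  · -- equality of row modules ⇒ parametrizability
    intro hspan
    ext f
    constructor
    · -- the hard inclusion, via injectivity of F
      intro hfA
      have hfA' : ∀ i, ∑ j, A' i j • f j = 0 := by
        refine (solspan A' f).1 ?_
        rw [← hspan]
        exact (solspan A f).2 hfA
      -- kernel condition
      have hK : LinearMap.ker B.vecMulLinear ≤ LinearMap.ker (lcAux (R := R) f) := by
        rw [hlker, Submodule.span_le]
        rintro _ ⟨i, rfl⟩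
        simpa [LinearMap.mem_ker, lcAux_apply] using hfA' i
      -- the embedding of R^{ℓ''} into a Type-v module, using the cogenerator property
      let jY : (Fin ℓ'' → R) →ₗ[R] ((Fin ℓ'' → F) → F) :=
        { toFun := fun y => fun g => lcAux (R := R) g y
          map_add' := fun y z => by funext g; simp
          map_smul' := fun c y => by funext g; simp }
      have hjY : Function.Injective jY := by
        intro y z hyz
        by_contra hne
        obtain ⟨φ, hφ⟩ := hcog (Fin ℓ'' → R) (y - z) (sub_ne_zero.mpr hne)
        have hyz' := congrFun hyz (fun k => φ (Pi.single k 1))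
        apply hφ
        have hval : ∀ w : Fin ℓ'' → R,
            lcAux (R := R) (fun k => φ (Pi.single k (1:R))) w = φ w := by
          intro w
          rw [lcAux_apply]
          conv_rhs => rw [single_decomp w]
          rw [map_sum]
          simp
        rw [map_sub, sub_eq_zero]
        rw [← hval y, ← hval z]
        exact hyz'
      set K := LinearMap.ker B.vecMulLinear with hKdef
      have hKm : K ≤ LinearMap.ker (jY ∘ₗ B.vecMulLinear) := by
        intro w hw
        have : B.vecMulLinear w = 0 := hw
        simp [LinearMap.mem_ker, this]
      let g : ((Fin ℓ → R) ⧸ K) →ₗ[R] F := K.liftQ (lcAux (R := R) f) hK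
      let m : ((Fin ℓ → R) ⧸ K) →ₗ[R] ((Fin ℓ'' → F) → F) :=
        K.liftQ (jY ∘ₗ B.vecMulLinear) hKm
      have hm : Function.Injective m := by
        rw [← LinearMap.ker_eq_bot]
        refine Submodule.ker_liftQ_eq_bot _ _ _ ?_
        intro w hw
        have hw' : jY (B.vecMulLinear w) = 0 := hw
        have : B.vecMulLinear w = 0 := hjY (by simpa using hw')
        exact this
      obtain ⟨p, hp⟩ := hinj.out (LinearMap.range m).subtype (Submodule.injective_subtype _)
        (g ∘ₗ (LinearEquiv.ofInjective m hm).symm.toLinearMap)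
      have hpm : ∀ x, p (m x) = g x := by
        intro x
        have h1 := hp ((LinearEquiv.ofInjective m hm) x)
        have h2 : ((LinearMap.range m).subtype ((LinearEquiv.ofInjective m hm) x)) = m x := rfl
        rw [h2] at h1
        simpa using h1
      refine ⟨fun k => p (jY (Pi.single k 1)), ?_⟩
      funext i
      have key : p (jY (B.vecMulLinear (Pi.single i 1))) = lcAux (R := R) f (Pi.single i 1) := by
        have := hpm (Submodule.Quotient.mk (Pi.single i 1))
        simpa [m, g, Submodule.liftQ_apply] using this
      have hrow : B.vecMulLinear (Pi.single i (1:R)) = fun k => B i k := by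
        funext k
        simp [Matrix.vecMulLinear_apply, Matrix.vecMul, dotProduct, Pi.single_apply]
      have hBrow : p (jY (fun k => B i k)) = ∑ k, B i k • p (jY (Pi.single k 1)) := by
        conv_lhs => rw [show (fun k => B i k) = ∑ k, B i k • (Pi.single k (1:R) : Fin ℓ'' → R)
          from single_decomp _]
        rw [map_sum, map_sum]
        simp
      rw [hrow] at key
      rw [lcAux_single] at key
      rw [← key, hBrow]
    · rintro ⟨h, rfl⟩
      intro i
      simpa using comp A hAB h i
end

section
/- (Example 4.3, left kernel.) Let R = MvPolynomial (Fin 3) ℚ with variables x₁ = X 0, x₂ = X 1, x₃ = X 2, and let B be the 3×3 matrix over R with rows (0, x₃, −x₂), (−x₃, 0, x₁), (x₂, −x₁, 0). The kernel of the R-linear map R³ → R³, w ↦ Matrix.vecMul w B, equals the R-submodule of R³ generated by the single vector (x₁, x₂, x₃). -/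
open MvPolynomial Matrix

/-- Every variable `X i` is prime in `ℚ[x₁,x₂,x₃]`. -/
lemma prime_X3_aux (i : Fin 3) : Prime (X i : MvPolynomial (Fin 3) ℚ) := by
  have h0 : Prime (X 0 : MvPolynomial (Fin 3) ℚ) := by
    rw [← MulEquiv.prime_iff (finSuccEquiv ℚ 2).toMulEquiv]
    have : (finSuccEquiv ℚ 2).toMulEquiv (X 0) = Polynomial.X := by
      simp [finSuccEquiv_X_zero]
    rw [this]
    exact Polynomial.prime_X
  have := (MulEquiv.prime_iff (renameEquiv ℚ (Equiv.swap (0 : Fin 3) i)).toMulEquiv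
    (p := (X 0 : MvPolynomial (Fin 3) ℚ))).mpr h0
  simpa using this

/-- Example 4.3, left kernel: over `R = ℚ[x₁,x₂,x₃]`, the left kernel of the curl matrix
`B` (rows `(0, x₃, −x₂)`, `(−x₃, 0, x₁)`, `(x₂, −x₁, 0)`) is generated by the single row
vector `(x₁, x₂, x₃)`. -/
theorem curl_left_kernel
    (B : Matrix (Fin 3) (Fin 3) (MvPolynomial (Fin 3) ℚ))
    (hB : B = !![0, X 2, -(X 1); -(X 2), 0, X 0; X 1, -(X 0), 0]) :
    LinearMap.ker B.vecMulLinear =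
      Submodule.span (MvPolynomial (Fin 3) ℚ) {![X 0, X 1, X 2]} := by
  subst hB
  apply le_antisymm
  · intro w hw
    rw [LinearMap.mem_ker, Matrix.vecMulLinear_apply] at hw
    have e1 := congrFun hw 1
    have e2 := congrFun hw 2
    simp [Matrix.vecMul, dotProduct, Fin.sum_univ_three] at e1 e2
    -- e1 : w 0 * X 2 + -(w 2 * X 0) = 0, e2 : -(w 0 * X 1) + w 1 * X 0 = 0
    have e1' : w 0 * X 2 = w 2 * X 0 := by linear_combination e1
    have e2' : w 1 * X 0 = w 0 * X 1 := by linear_combination e2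
    have hX0 : (X 0 : MvPolynomial (Fin 3) ℚ) ≠ 0 := X_ne_zero 0
    -- X 0 does not divide X 2
    have hnd : ¬ (X 0 : MvPolynomial (Fin 3) ℚ) ∣ X 2 := by
      rintro ⟨q, hq⟩
      have h := congrArg (eval (fun j : Fin 3 => if j = 2 then (1 : ℚ) else 0)) hq
      simp at h
    have hdvd : (X 0 : MvPolynomial (Fin 3) ℚ) ∣ X 2 * w 0 := ⟨w 2, by linear_combination e1'⟩
    have ht : (X 0 : MvPolynomial (Fin 3) ℚ) ∣ w 0 :=
      ((prime_X3_aux 0).dvd_mul.mp hdvd).resolve_left hnd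
    obtain ⟨t, ht⟩ := ht
    have h2 : w 2 = t * X 2 := by
      apply mul_left_cancel₀ hX0
      linear_combination -e1' + X 2 * ht
    have h1 : w 1 = t * X 1 := by
      apply mul_left_cancel₀ hX0
      linear_combination e2' + X 1 * ht
    refine Submodule.mem_span_singleton.mpr ⟨t, ?_⟩
    funext j
    fin_cases j <;> simp [ht, h1, h2, mul_comm]
  · rw [Submodule.span_le, Set.singleton_subset_iff]
    rw [SetLike.mem_coe, LinearMap.mem_ker, Matrix.vecMulLinear_apply]
    funext j
    fin_cases j <;>
      simp [Matrix.vecMul, dotProduct, Fin.sum_univ_three] <;> ring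
end

section
/- (Example 4.1, Maxwell right kernel.) Let R = MvPolynomial (Fin 4) ℝ with variables dx = X 0, dy = X 1, dz = X 2, dt = X 3. Let A be the 8×10 matrix over R with rows: r₁ = (0, −dz, dy, dt, 0, 0, 0, 0, 0, 0); r₂ = (dz, 0, −dx, 0, dt, 0, 0, 0, 0, 0); r₃ = (−dy, dx, 0, 0, 0, dt, 0, 0, 0, 0); r₄ = (0, 0, 0, dx, dy, dz, 0, 0, 0, 0); r₅ = (−dt, 0, 0, 0, −dz, dy, −1, 0, 0, 0); r₆ = (0, −dt, 0, dz, 0, −dx, 0, −1, 0, 0); r₇ = (0, 0, −dt, −dy, dx, 0, 0, 0, −1, 0); r₈ = (dx, dy, dz, 0, 0, 0, 0, 0, 0, −1). Let B be the 10×4 matrix over R with rows: (dx, dt, 0, 0); (dy, 0, dt, 0); (dz, 0, 0, dt); (0, 0, dz, −dy); (0, −dz, 0, dx); (0, dy, −dx, 0); (−dt·dx, dy²+dz²−dt², −dy·dx, −dz·dx); (−dt·dy, −dy·dx, dx²+dz²−dt², −dz·dy); (−dt·dz, −dz·dx, −dz·dy, dx²+dy²−dt²); (dx²+dy²+dz²,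 dt·dx, dt·dy, dt·dz). Then the kernel of the R-linear map R¹⁰ → R⁸, v ↦ Matrix.mulVec A v, equals the R-submodule of R¹⁰ generated by the four columns of B; in particular A * B = 0. -/
open MvPolynomial Matrix

noncomputable section

/-- The operator symbol `∂ₓ`. -/
def dx : MvPolynomial (Fin 4) ℝ := X 0
/-- The operator symbol `∂_y`. -/
def dy : MvPolynomial (Fin 4) ℝ := X 1
/-- The operator symbol `∂_z`. -/
def dz : MvPolynomial (Fin 4) ℝ := X 2
/-- The operator symbol `∂_t`. -/
def dt : MvPolynomial (Fin 4) ℝ := X 3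

/-- The operator matrix of the inhomogeneous Maxwell equations (all constants set to 1). -/
def maxwellA : Matrix (Fin 8) (Fin 10) (MvPolynomial (Fin 4) ℝ) :=
  !![0, -dz, dy, dt, 0, 0, 0, 0, 0, 0;
     dz, 0, -dx, 0, dt, 0, 0, 0, 0, 0;
     -dy, dx, 0, 0, 0, dt, 0, 0, 0, 0;
     0, 0, 0, dx, dy, dz, 0, 0, 0, 0;
     -dt, 0, 0, 0, -dz, dy, -1, 0, 0, 0;
     0, -dt, 0, dz, 0, -dx, 0, -1, 0, 0;
     0, 0, -dt, -dy, dx, 0, 0, 0, -1, 0;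
     dx, dy, dz, 0, 0, 0, 0, 0, 0, -1]

/-- The parametrization of Maxwell's equations by the electric and magnetic potentials. -/
def maxwellB : Matrix (Fin 10) (Fin 4) (MvPolynomial (Fin 4) ℝ) :=
  !![dx, dt, 0, 0;
     dy, 0, dt, 0;
     dz, 0, 0, dt;
     0, 0, dz, -dy;
     0, -dz, 0, dx;
     0, dy, -dx, 0;
     -(dt*dx), dy^2+dz^2-dt^2, -(dy*dx), -(dz*dx);
     -(dt*dy), -(dy*dx), dx^2+dz^2-dt^2, -(dz*dy);
     -(dt*dz), -(dz*dx), -(dz*dy), dx^2+dy^2-dt^2;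
     dx^2+dy^2+dz^2, dt*dx, dt*dy, dt*dz]

section MaxwellAux

abbrev R4 := MvPolynomial (Fin 4) ℝ

@[simp] lemma cv2_1 {α : Type*} (x : α) (u : Fin 1 → α) : Matrix.vecCons x u (1 : Fin 2) = u 0 := rfl
@[simp] lemma cv3_1 {α : Type*} (x : α) (u : Fin 2 → α) : Matrix.vecCons x u (1 : Fin 3) = u 0 := rfl
@[simp] lemma cv3_2 {α : Type*} (x : α) (u : Fin 2 → α) : Matrix.vecCons x u (2 : Fin 3) = u 1 := rfl
@[simp] lemma cv4_1 {α : Type*} (x : α) (u : Fin 3 → α) : Matrix.vecCons x u (1 : Fin 4) = u 0 := rfl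
@[simp] lemma cv4_2 {α : Type*} (x : α) (u : Fin 3 → α) : Matrix.vecCons x u (2 : Fin 4) = u 1 := rfl
@[simp] lemma cv4_3 {α : Type*} (x : α) (u : Fin 3 → α) : Matrix.vecCons x u (3 : Fin 4) = u 2 := rfl
@[simp] lemma cv5_1 {α : Type*} (x : α) (u : Fin 4 → α) : Matrix.vecCons x u (1 : Fin 5) = u 0 := rfl
@[simp] lemma cv5_2 {α : Type*} (x : α) (u : Fin 4 → α) : Matrix.vecCons x u (2 : Fin 5) = u 1 := rfl
@[simp] lemma cv5_3 {α : Type*} (x : α) (u : Fin 4 → α) : Matrix.vecCons x u (3 : Fin 5) = u 2 := rfl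
@[simp] lemma cv5_4 {α : Type*} (x : α) (u : Fin 4 → α) : Matrix.vecCons x u (4 : Fin 5) = u 3 := rfl
@[simp] lemma cv6_1 {α : Type*} (x : α) (u : Fin 5 → α) : Matrix.vecCons x u (1 : Fin 6) = u 0 := rfl
@[simp] lemma cv6_2 {α : Type*} (x : α) (u : Fin 5 → α) : Matrix.vecCons x u (2 : Fin 6) = u 1 := rfl
@[simp] lemma cv6_3 {α : Type*} (x : α) (u : Fin 5 → α) : Matrix.vecCons x u (3 : Fin 6) = u 2 := rfl
@[simp] lemma cv6_4 {α : Type*} (x : α) (u : Fin 5 → α) : Matrix.vecCons x u (4 : Fin 6) = u 3 := rfl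
@[simp] lemma cv6_5 {α : Type*} (x : α) (u : Fin 5 → α) : Matrix.vecCons x u (5 : Fin 6) = u 4 := rfl
@[simp] lemma cv7_1 {α : Type*} (x : α) (u : Fin 6 → α) : Matrix.vecCons x u (1 : Fin 7) = u 0 := rfl
@[simp] lemma cv7_2 {α : Type*} (x : α) (u : Fin 6 → α) : Matrix.vecCons x u (2 : Fin 7) = u 1 := rfl
@[simp] lemma cv7_3 {α : Type*} (x : α) (u : Fin 6 → α) : Matrix.vecCons x u (3 : Fin 7) = u 2 := rfl
@[simp] lemma cv7_4 {α : Type*} (x : α) (u : Fin 6 → α) : Matrix.vecCons x u (4 : Fin 7) = u 3 := rfl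
@[simp] lemma cv7_5 {α : Type*} (x : α) (u : Fin 6 → α) : Matrix.vecCons x u (5 : Fin 7) = u 4 := rfl
@[simp] lemma cv7_6 {α : Type*} (x : α) (u : Fin 6 → α) : Matrix.vecCons x u (6 : Fin 7) = u 5 := rfl
@[simp] lemma cv8_1 {α : Type*} (x : α) (u : Fin 7 → α) : Matrix.vecCons x u (1 : Fin 8) = u 0 := rfl
@[simp] lemma cv8_2 {α : Type*} (x : α) (u : Fin 7 → α) : Matrix.vecCons x u (2 : Fin 8) = u 1 := rfl
@[simp] lemma cv8_3 {α : Type*} (x : α) (u : Fin 7 → α) : Matrix.vecCons x u (3 : Fin 8) = u 2 := rfl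
@[simp] lemma cv8_4 {α : Type*} (x : α) (u : Fin 7 → α) : Matrix.vecCons x u (4 : Fin 8) = u 3 := rfl
@[simp] lemma cv8_5 {α : Type*} (x : α) (u : Fin 7 → α) : Matrix.vecCons x u (5 : Fin 8) = u 4 := rfl
@[simp] lemma cv8_6 {α : Type*} (x : α) (u : Fin 7 → α) : Matrix.vecCons x u (6 : Fin 8) = u 5 := rfl
@[simp] lemma cv8_7 {α : Type*} (x : α) (u : Fin 7 → α) : Matrix.vecCons x u (7 : Fin 8) = u 6 := rfl
@[simp] lemma cv9_1 {α : Type*} (x : α) (u : Fin 8 → α) : Matrix.vecCons x u (1 : Fin 9) = u 0 := rfl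
@[simp] lemma cv9_2 {α : Type*} (x : α) (u : Fin 8 → α) : Matrix.vecCons x u (2 : Fin 9) = u 1 := rfl
@[simp] lemma cv9_3 {α : Type*} (x : α) (u : Fin 8 → α) : Matrix.vecCons x u (3 : Fin 9) = u 2 := rfl
@[simp] lemma cv9_4 {α : Type*} (x : α) (u : Fin 8 → α) : Matrix.vecCons x u (4 : Fin 9) = u 3 := rfl
@[simp] lemma cv9_5 {α : Type*} (x : α) (u : Fin 8 → α) : Matrix.vecCons x u (5 : Fin 9) = u 4 := rfl
@[simp] lemma cv9_6 {α : Type*} (x : α) (u : Fin 8 → α) : Matrix.vecCons x u (6 : Fin 9) = u 5 := rfl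
@[simp] lemma cv9_7 {α : Type*} (x : α) (u : Fin 8 → α) : Matrix.vecCons x u (7 : Fin 9) = u 6 := rfl
@[simp] lemma cv9_8 {α : Type*} (x : α) (u : Fin 8 → α) : Matrix.vecCons x u (8 : Fin 9) = u 7 := rfl
@[simp] lemma cv10_1 {α : Type*} (x : α) (u : Fin 9 → α) : Matrix.vecCons x u (1 : Fin 10) = u 0 := rfl
@[simp] lemma cv10_2 {α : Type*} (x : α) (u : Fin 9 → α) : Matrix.vecCons x u (2 : Fin 10) = u 1 := rfl
@[simp] lemma cv10_3 {α : Type*} (x : α) (u : Fin 9 → α) : Matrix.vecCons x u (3 : Fin 10) = u 2 := rfl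
@[simp] lemma cv10_4 {α : Type*} (x : α) (u : Fin 9 → α) : Matrix.vecCons x u (4 : Fin 10) = u 3 := rfl
@[simp] lemma cv10_5 {α : Type*} (x : α) (u : Fin 9 → α) : Matrix.vecCons x u (5 : Fin 10) = u 4 := rfl
@[simp] lemma cv10_6 {α : Type*} (x : α) (u : Fin 9 → α) : Matrix.vecCons x u (6 : Fin 10) = u 5 := rfl
@[simp] lemma cv10_7 {α : Type*} (x : α) (u : Fin 9 → α) : Matrix.vecCons x u (7 : Fin 10) = u 6 := rfl
@[simp] lemma cv10_8 {α : Type*} (x : α) (u : Fin 9 → α) : Matrix.vecCons x u (8 : Fin 10) = u 7 := rfl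
@[simp] lemma cv10_9 {α : Type*} (x : α) (u : Fin 9 → α) : Matrix.vecCons x u (9 : Fin 10) = u 8 := rfl
@[simp] lemma eta4_0 (h : 0 < 4) : (⟨0, h⟩ : Fin 4) = 0 := rfl
@[simp] lemma eta4_1 (h : 1 < 4) : (⟨1, h⟩ : Fin 4) = 1 := rfl
@[simp] lemma eta4_2 (h : 2 < 4) : (⟨2, h⟩ : Fin 4) = 2 := rfl
@[simp] lemma eta4_3 (h : 3 < 4) : (⟨3, h⟩ : Fin 4) = 3 := rfl
@[simp] lemma eta8_0 (h : 0 < 8) : (⟨0, h⟩ : Fin 8) = 0 := rfl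
@[simp] lemma eta8_1 (h : 1 < 8) : (⟨1, h⟩ : Fin 8) = 1 := rfl
@[simp] lemma eta8_2 (h : 2 < 8) : (⟨2, h⟩ : Fin 8) = 2 := rfl
@[simp] lemma eta8_3 (h : 3 < 8) : (⟨3, h⟩ : Fin 8) = 3 := rfl
@[simp] lemma eta8_4 (h : 4 < 8) : (⟨4, h⟩ : Fin 8) = 4 := rfl
@[simp] lemma eta8_5 (h : 5 < 8) : (⟨5, h⟩ : Fin 8) = 5 := rfl
@[simp] lemma eta8_6 (h : 6 < 8) : (⟨6, h⟩ : Fin 8) = 6 := rfl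
@[simp] lemma eta8_7 (h : 7 < 8) : (⟨7, h⟩ : Fin 8) = 7 := rfl
@[simp] lemma eta10_0 (h : 0 < 10) : (⟨0, h⟩ : Fin 10) = 0 := rfl
@[simp] lemma eta10_1 (h : 1 < 10) : (⟨1, h⟩ : Fin 10) = 1 := rfl
@[simp] lemma eta10_2 (h : 2 < 10) : (⟨2, h⟩ : Fin 10) = 2 := rfl
@[simp] lemma eta10_3 (h : 3 < 10) : (⟨3, h⟩ : Fin 10) = 3 := rfl
@[simp] lemma eta10_4 (h : 4 < 10) : (⟨4, h⟩ : Fin 10) = 4 := rfl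
@[simp] lemma eta10_5 (h : 5 < 10) : (⟨5, h⟩ : Fin 10) = 5 := rfl
@[simp] lemma eta10_6 (h : 6 < 10) : (⟨6, h⟩ : Fin 10) = 6 := rfl
@[simp] lemma eta10_7 (h : 7 < 10) : (⟨7, h⟩ : Fin 10) = 7 := rfl
@[simp] lemma eta10_8 (h : 8 < 10) : (⟨8, h⟩ : Fin 10) = 8 := rfl
@[simp] lemma eta10_9 (h : 9 < 10) : (⟨9, h⟩ : Fin 10) = 9 := rfl


lemma sum_univ_nine' {β : Type*} [AddCommMonoid β] (f : Fin 9 → β) :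
    ∑ i, f i = f 0 + f 1 + f 2 + f 3 + f 4 + f 5 + f 6 + f 7 + f 8 := by
  rw [Fin.sum_univ_castSucc, Fin.sum_univ_eight]; rfl

lemma sum_univ_ten' {β : Type*} [AddCommMonoid β] (f : Fin 10 → β) :
    ∑ i, f i = f 0 + f 1 + f 2 + f 3 + f 4 + f 5 + f 6 + f 7 + f 8 + f 9 := by
  rw [Fin.sum_univ_castSucc, sum_univ_nine']; rfl

lemma dot10 (a0 a1 a2 a3 a4 a5 a6 a7 a8 a9 : R4) (v : Fin 10 → R4) :
    (![a0,a1,a2,a3,a4,a5,a6,a7,a8,a9] : Fin 10 → R4) ⬝ᵥ v =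
      a0 * v 0 + a1 * v 1 + a2 * v 2 + a3 * v 3 + a4 * v 4 + a5 * v 5 +
        a6 * v 6 + a7 * v 7 + a8 * v 8 + a9 * v 9 := by
  rw [show (![a0,a1,a2,a3,a4,a5,a6,a7,a8,a9] ⬝ᵥ v) =
    ∑ i, ![a0,a1,a2,a3,a4,a5,a6,a7,a8,a9] i * v i from rfl, sum_univ_ten']
  rfl

noncomputable def killVar (k : Fin 4) : Fin 4 → R4 := fun i => if i = k then 0 else X i

@[simp] lemma killVar_same (k : Fin 4) : killVar k k = 0 := by simp [killVar]
@[simp] lemma killVar_ne (k i : Fin 4) (h : i ≠ k) : killVar k i = X i := if_neg h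

lemma kill_decomp (k : Fin 4) (f : R4) : ∃ g, f = aeval (killVar k) f + X k * g := by
  induction f using MvPolynomial.induction_on with
  | C a => exact ⟨0, by simp⟩
  | add p q hp hq =>
    obtain ⟨g1, h1⟩ := hp; obtain ⟨g2, h2⟩ := hq
    exact ⟨g1 + g2, by rw [_root_.map_add]; linear_combination h1 + h2⟩
  | mul_X p i hp =>
    obtain ⟨g, hg⟩ := hp
    by_cases hik : i = k
    · subst hik
      exact ⟨p, by rw [_root_.map_mul, aeval_X, killVar_same]; ring⟩
    · refine ⟨g * X i, ?_⟩
      rw [_root_.map_mul, aeval_X, killVar_ne k i hik]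
      linear_combination X i * hg

lemma kill_dvd (k : Fin 4) (f : R4) (h : aeval (killVar k) f = 0) : ∃ g, f = X k * g := by
  obtain ⟨g, hg⟩ := kill_decomp k f
  exact ⟨g, by rw [hg, h, zero_add]⟩

lemma koszul2 (p q s : R4) (h3 : X 0 * q = X 1 * p) (h2 : X 2 * p = X 0 * s) :
    ∃ c, p = X 0 * c ∧ q = X 1 * c ∧ s = X 2 * c := by
  have hp : aeval (killVar 0) p = 0 := by
    have h' := congrArg (aeval (killVar 0)) h3
    simp only [_root_.map_mul, aeval_X, killVar_same, killVar_ne 0 1 (by decide), zero_mul] at h'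
    exact (mul_eq_zero.mp h'.symm).resolve_left (X_ne_zero 1)
  obtain ⟨c, hc⟩ := kill_dvd 0 p hp
  refine ⟨c, hc, ?_, ?_⟩
  · exact mul_left_cancel₀ (X_ne_zero 0) (by rw [h3, hc]; ring)
  · exact mul_left_cancel₀ (X_ne_zero 0) (by rw [← h2, hc]; ring)

lemma koszul3 (p q s : R4) (h : X 0 * p + X 1 * q + X 2 * s = 0) :
    ∃ c1 c2 c3, p = X 2 * c2 - X 1 * c3 ∧ q = -(X 2 * c1) + X 0 * c3 ∧
      s = X 1 * c1 - X 0 * c2 := by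
  obtain ⟨q', hq'⟩ := kill_decomp 0 q
  obtain ⟨s', hs'⟩ := kill_decomp 0 s
  set q0 := aeval (killVar 0) q with hq0
  set s0 := aeval (killVar 0) s with hs0
  have h0 : X 1 * q0 + X 2 * s0 = 0 := by
    have h' := congrArg (aeval (killVar 0)) h
    simp only [_root_.map_add, _root_.map_mul, aeval_X, killVar_same, killVar_ne 0 1 (by decide),
      killVar_ne 0 2 (by decide), zero_mul, zero_add] at h'
    exact h'
  have hq02 : aeval (killVar 2) q0 = 0 := by
    have h' := congrArg (aeval (killVar 2)) h0
    simp only [_root_.map_add, _root_.map_mul, aeval_X, killVar_same, killVar_ne 2 1 (by decide),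
      zero_mul, add_zero, _root_.map_zero] at h'
    exact (mul_eq_zero.mp h').resolve_left (X_ne_zero 1)
  obtain ⟨u, hu⟩ := kill_dvd 2 q0 hq02
  have hs0u : s0 = -(X 1 * u) := by
    refine mul_left_cancel₀ (X_ne_zero 2) ?_
    linear_combination h0 - X 1 * hu
  have hp : p = -(X 1 * q') - X 2 * s' := by
    refine mul_left_cancel₀ (X_ne_zero 0) ?_
    linear_combination h - X 1 * hq' - X 2 * hs' - X 1 * hu - X 2 * hs0u
  exact ⟨-u, -s', q', by rw [hp]; ring,
    by rw [hq', hu]; ring, by rw [hs', hs0u]; ring⟩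

lemma maxwellAB : maxwellA * maxwellB = 0 := by
  refine Matrix.ext fun i j => ?_
  rw [Matrix.mul_apply, sum_univ_ten']
  fin_cases i <;> fin_cases j <;>
    · simp only [maxwellA, maxwellB, dx, dy, dz, dt, Matrix.of_apply, Matrix.cons_val_zero,
        cv10_1, cv10_2, cv10_3, cv10_4, cv10_5, cv10_6, cv10_7, cv10_8, cv10_9,
        cv9_1, cv9_2, cv9_3, cv9_4, cv9_5, cv9_6, cv9_7, cv9_8,
        cv8_1, cv8_2, cv8_3, cv8_4, cv8_5, cv8_6, cv8_7,
        cv7_1, cv7_2, cv7_3, cv7_4, cv7_5, cv7_6,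
        cv6_1, cv6_2, cv6_3, cv6_4, cv6_5,
        cv5_1, cv5_2, cv5_3, cv5_4,
        cv4_1, cv4_2, cv4_3, cv3_1, cv3_2, cv2_1,
        eta8_0, eta8_1, eta8_2, eta8_3, eta8_4, eta8_5, eta8_6, eta8_7,
        eta4_0, eta4_1, eta4_2, eta4_3,
        eta10_0, eta10_1, eta10_2, eta10_3, eta10_4, eta10_5, eta10_6, eta10_7, eta10_8, eta10_9,
        Matrix.zero_apply]
      ring

end MaxwellAux

/-- Example 4.1, Maxwell right kernel: the right kernel of the Maxwell operator matrix `A`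
is generated by the four columns of the potential matrix `B`; in particular `A * B = 0`. -/
theorem maxwell_right_kernel :
    LinearMap.ker maxwellA.mulVecLin =
      Submodule.span (MvPolynomial (Fin 4) ℝ)
        (Set.range fun j : Fin 4 => fun i : Fin 10 => maxwellB i j) ∧
    maxwellA * maxwellB = 0 := by
  refine ⟨le_antisymm ?_ ?_, maxwellAB⟩
  · -- kernel ⊆ span of columns of B
    intro v hv
    have hv' : maxwellA.mulVec v = 0 := by
      rw [← Matrix.mulVecLin_apply]; exact LinearMap.mem_ker.mp hv
    have h0 : (![0, -(X 2), X 1, X 3, 0,0,0,0,0,0] : Fin 10 → R4) ⬝ᵥ v = 0 := congrFun hv' 0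
    have h1 : (![X 2, 0, -(X 0), 0, X 3, 0,0,0,0,0] : Fin 10 → R4) ⬝ᵥ v = 0 := congrFun hv' 1
    have h2 : (![-(X 1), X 0, 0, 0, 0, X 3, 0,0,0,0] : Fin 10 → R4) ⬝ᵥ v = 0 := congrFun hv' 2
    have h3 : (![0, 0, 0, X 0, X 1, X 2, 0,0,0,0] : Fin 10 → R4) ⬝ᵥ v = 0 := congrFun hv' 3
    have h4 : (![-(X 3), 0, 0, 0, -(X 2), X 1, -1, 0,0,0] : Fin 10 → R4) ⬝ᵥ v = 0 := congrFun hv' 4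
    have h5 : (![0, -(X 3), 0, X 2, 0, -(X 0), 0, -1, 0,0] : Fin 10 → R4) ⬝ᵥ v = 0 := congrFun hv' 5
    have h6 : (![0, 0, -(X 3), -(X 1), X 0, 0, 0, 0, -1, 0] : Fin 10 → R4) ⬝ᵥ v = 0 := congrFun hv' 6
    have h7 : (![X 0, X 1, X 2, 0,0,0,0,0,0, -1] : Fin 10 → R4) ⬝ᵥ v = 0 := congrFun hv' 7
    rw [dot10] at h0 h1 h2 h3 h4 h5 h6 h7
    have E4 : X 0 * v 3 + X 1 * v 4 + X 2 * v 5 = 0 := by linear_combination h3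
    obtain ⟨c1, c2, c3, hv3, hv4, hv5⟩ := koszul3 (v 3) (v 4) (v 5) E4
    obtain ⟨c0, hw0, hw1, hw2⟩ :=
      koszul2 (v 0 - X 3 * c1) (v 1 - X 3 * c2) (v 2 - X 3 * c3)
        (by linear_combination h2 - X 3 * hv5) (by linear_combination h1 - X 3 * hv4)
    have g0 : v 0 = X 0 * c0 + X 3 * c1 := by linear_combination hw0
    have g1 : v 1 = X 1 * c0 + X 3 * c2 := by linear_combination hw1
    have g2 : v 2 = X 2 * c0 + X 3 * c3 := by linear_combination hw2
    have g6 : v 6 = -(X 3 * X 0) * c0 + (X 1^2 + X 2^2 - X 3^2) * c1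
        - X 1 * X 0 * c2 - X 2 * X 0 * c3 := by
      linear_combination -h4 - X 3 * g0 - X 2 * hv4 + X 1 * hv5
    have g7 : v 7 = -(X 3 * X 1) * c0 - X 1 * X 0 * c1
        + (X 0^2 + X 2^2 - X 3^2) * c2 - X 2 * X 1 * c3 := by
      linear_combination -h5 - X 3 * g1 + X 2 * hv3 - X 0 * hv5
    have g8 : v 8 = -(X 3 * X 2) * c0 - X 2 * X 0 * c1 - X 2 * X 1 * c2
        + (X 0^2 + X 1^2 - X 3^2) * c3 := by
      linear_combination -h6 - X 3 * g2 - X 1 * hv3 + X 0 * hv4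
    have g9 : v 9 = (X 0^2 + X 1^2 + X 2^2) * c0 + X 3 * X 0 * c1
        + X 3 * X 1 * c2 + X 3 * X 2 * c3 := by
      linear_combination -h7 + X 0 * g0 + X 1 * g1 + X 2 * g2
    have hdec : v = c0 • (fun i => maxwellB i 0) + c1 • (fun i => maxwellB i 1)
        + c2 • (fun i => maxwellB i 2) + c3 • (fun i => maxwellB i 3) := by
      funext i
      have hB : ∀ (k : Fin 10),
          (c0 • (fun i => maxwellB i 0) + c1 • (fun i => maxwellB i 1)
            + c2 • (fun i => maxwellB i 2) + c3 • (fun i => maxwellB i 3)) k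
          = c0 * maxwellB k 0 + c1 * maxwellB k 1 + c2 * maxwellB k 2 + c3 * maxwellB k 3 :=
        fun k => rfl
      fin_cases i <;> rw [hB] <;>
        simp only [maxwellB, dx, dy, dz, dt, Matrix.of_apply, Matrix.cons_val_zero,
          cv10_1, cv10_2, cv10_3, cv10_4, cv10_5, cv10_6, cv10_7, cv10_8, cv10_9,
          cv9_1, cv9_2, cv9_3, cv9_4, cv9_5, cv9_6, cv9_7, cv9_8,
          cv8_1, cv8_2, cv8_3, cv8_4, cv8_5, cv8_6, cv8_7,
          cv7_1, cv7_2, cv7_3, cv7_4, cv7_5, cv7_6,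
          cv6_1, cv6_2, cv6_3, cv6_4, cv6_5,
          cv5_1, cv5_2, cv5_3, cv5_4,
          cv4_1, cv4_2, cv4_3, cv3_1, cv3_2, cv2_1,
          eta4_0, eta4_1, eta4_2, eta4_3,
          eta10_0, eta10_1, eta10_2, eta10_3, eta10_4, eta10_5, eta10_6, eta10_7, eta10_8, eta10_9]
      · linear_combination g0
      · linear_combination g1
      · linear_combination g2
      · linear_combination hv3
      · linear_combination hv4
      · linear_combination hv5
      · linear_combination g6
      · linear_combination g7
      · linear_combination g8
      · linear_combination g9
    rw [hdec]
    have hmem : ∀ j : Fin 4, (fun i => maxwellB i j) ∈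
        Submodule.span (MvPolynomial (Fin 4) ℝ)
          (Set.range fun j : Fin 4 => fun i : Fin 10 => maxwellB i j) :=
      fun j => Submodule.subset_span ⟨j, rfl⟩
    exact Submodule.add_mem _ (Submodule.add_mem _ (Submodule.add_mem _
      (Submodule.smul_mem _ _ (hmem 0)) (Submodule.smul_mem _ _ (hmem 1)))
      (Submodule.smul_mem _ _ (hmem 2))) (Submodule.smul_mem _ _ (hmem 3))
  · -- span ⊆ kernel
    rw [Submodule.span_le]
    rintro _ ⟨j, rfl⟩
    rw [SetLike.mem_coe, LinearMap.mem_ker]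
    funext i
    have := congrFun (congrFun maxwellAB i) j
    rw [Matrix.mul_apply] at this
    simpa [Matrix.mulVecLin_apply, Matrix.mulVec, dotProduct] using this

end
end
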